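/- Let φ be the unique solution of φ(t) − ∫_a^b K(t,s)φ(s)ds = f(t), with resolvent kernel Γ_ξ of the truncated equation for each ξ. Then φ(t) = g(t) + ∫_t^b Γ_ξ(t,ξ)g(ξ) dξ, where g(t) := f(t) + ∫_a^t Γ_t(t,s)f(s) ds. -/

import Mathlib

open Matrix intervalIntegral Set
open MeasureTheory

attribute [local instance] Matrix.normedAddCommGroup Matrix.normedSpace

lemma fubini_rect {E : Type*} [NormedAddCommGroup E] [NormedSpace ℝ E] [CompleteSpace E]
    {F : ℝ → ℝ → E} (hF : Continuous (Function.uncurry F))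
    {c d p q : ℝ} (hcd : c ≤ d) (hpq : p ≤ q) :
    ∫ x in c..d, ∫ y in p..q, F x y = ∫ y in p..q, ∫ x in c..d, F x y := by
  rw [intervalIntegral.integral_of_le hcd, intervalIntegral.integral_of_le hpq]
  simp_rw [intervalIntegral.integral_of_le hpq, intervalIntegral.integral_of_le hcd]
  apply MeasureTheory.integral_integral_swap
  rw [Measure.prod_restrict, ← Measure.volume_eq_prod]
  have h1 : IntegrableOn (Function.uncurry F) (Icc c d ×ˢ Icc p q) :=
    hF.continuousOn.integrableOn_compact (isCompact_Icc.prod isCompact_Icc)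
  exact h1.mono_set (Set.prod_mono Set.Ioc_subset_Icc_self Set.Ioc_subset_Icc_self)

lemma fubini_tri {E : Type*} [NormedAddCommGroup E] [NormedSpace ℝ E] [CompleteSpace E]
    {F : ℝ → ℝ → E} (hF : Continuous (Function.uncurry F))
    {t b : ℝ} (htb : t ≤ b) :
    ∫ s in t..b, ∫ ξ in s..b, F ξ s = ∫ ξ in t..b, ∫ s in t..ξ, F ξ s := by
  set W : ℝ → ℝ → E := fun s ξ =>
    Set.indicator {p : ℝ × ℝ | p.1 ≤ p.2} (fun p => F p.2 p.1) (s, ξ) with hWdef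
  have hmeas : MeasurableSet {p : ℝ × ℝ | p.1 ≤ p.2} :=
    measurableSet_le measurable_fst measurable_snd
  have hWint : Integrable (Function.uncurry W)
      ((volume.restrict (Ioc t b)).prod (volume.restrict (Ioc t b))) := by
    rw [Measure.prod_restrict, ← Measure.volume_eq_prod]
    have h1 : IntegrableOn (fun p : ℝ × ℝ => F p.2 p.1) (Icc t b ×ˢ Icc t b) :=
      (hF.comp (continuous_snd.prodMk continuous_fst)).continuousOn.integrableOn_compact
        (isCompact_Icc.prod isCompact_Icc)
    have h2 := (h1.mono_set
      (Set.prod_mono Set.Ioc_subset_Icc_self Set.Ioc_subset_Icc_self)).indicator hmeas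
    exact h2
  have key := MeasureTheory.integral_integral_swap hWint
  have hL : ∫ s in t..b, ∫ ξ in s..b, F ξ s
      = ∫ s in Ioc t b, ∫ ξ in Ioc t b, W s ξ := by
    rw [intervalIntegral.integral_of_le htb]
    refine setIntegral_congr_fun measurableSet_Ioc (fun s hs => ?_)
    have hw : (fun ξ => W s ξ) = Set.indicator (Ici s) (fun ξ => F ξ s) := by
      funext ξ
      by_cases h : s ≤ ξ <;>
        simp [hWdef, Set.indicator_apply, h, Set.mem_Ici]
    rw [hw, MeasureTheory.integral_indicator measurableSet_Ici,
      Measure.restrict_restrict measurableSet_Ici]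
    have hset : Ici s ∩ Ioc t b = Icc s b := by
      ext x
      simp only [mem_inter_iff, mem_Ici, mem_Ioc, mem_Icc]
      exact ⟨fun ⟨h1, _, h3⟩ => ⟨h1, h3⟩,
        fun ⟨h1, h2⟩ => ⟨h1, lt_of_lt_of_le hs.1 h1, h2⟩⟩
    rw [hset, MeasureTheory.integral_Icc_eq_integral_Ioc,
      intervalIntegral.integral_of_le hs.2]
  have hR : ∫ ξ in t..b, ∫ s in t..ξ, F ξ s
      = ∫ ξ in Ioc t b, ∫ s in Ioc t b, W s ξ := by
    rw [intervalIntegral.integral_of_le htb]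
    refine setIntegral_congr_fun measurableSet_Ioc (fun ξ hξ => ?_)
    have hw : (fun s => W s ξ) = Set.indicator (Iic ξ) (fun s => F ξ s) := by
      funext s
      by_cases h : s ≤ ξ <;>
        simp [hWdef, Set.indicator_apply, h, Set.mem_Iic]
    rw [hw, MeasureTheory.integral_indicator measurableSet_Iic,
      Measure.restrict_restrict measurableSet_Iic]
    have hset : Iic ξ ∩ Ioc t b = Ioc t ξ := by
      ext x
      simp only [mem_inter_iff, mem_Iic, mem_Ioc]
      exact ⟨fun ⟨h1, h2, _⟩ => ⟨h2, h1⟩,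
        fun ⟨h1, h2⟩ => ⟨h2, h1, le_trans h2 hξ.2⟩⟩
    rw [hset, intervalIntegral.integral_of_le hξ.1.le]
  rw [hL, hR]
  exact key

noncomputable def mulVecRightCLM {n : ℕ} (v : Fin n → ℂ) :
    Matrix (Fin n) (Fin n) ℂ →L[ℂ] (Fin n → ℂ) :=
  LinearMap.toContinuousLinearMap
    { toFun := fun A => A *ᵥ v
      map_add' := fun A B => Matrix.add_mulVec A B v
      map_smul' := fun c A => Matrix.smul_mulVec c A v }

@[simp] lemma mulVecRightCLM_apply {n : ℕ} (v : Fin n → ℂ) (A : Matrix (Fin n) (Fin n) ℂ) :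
    mulVecRightCLM v A = A *ᵥ v := rfl

lemma integral_mulVec_right {n : ℕ} {A : ℝ → Matrix (Fin n) (Fin n) ℂ} {c d : ℝ}
    (hA : @IntervalIntegrable _ (PseudoMetricSpace.toUniformSpace.toTopologicalSpace) _ A MeasureTheory.volume c d) (v : Fin n → ℂ) :
    ∫ x in c..d, A x *ᵥ v = (∫ x in c..d, A x) *ᵥ v :=
  (mulVecRightCLM v).intervalIntegral_comp_comm hA

lemma mulVec_integral {n : ℕ} (A : Matrix (Fin n) (Fin n) ℂ) {g : ℝ → Fin n → ℂ} {c d : ℝ}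
    (hg : IntervalIntegrable g MeasureTheory.volume c d) :
    A *ᵥ (∫ x in c..d, g x) = ∫ x in c..d, A *ᵥ g x := by
  have := (Matrix.mulVecLin A).toContinuousLinearMap.intervalIntegral_comp_comm hg
  simp only [LinearMap.coe_toContinuousLinearMap', Matrix.mulVecLin_apply] at this
  exact this.symm

/-- the unique solution φ of the full system is given by
φ(t) = g(t) + ∫_t^b Γ_ξ(t,ξ) g(ξ) dξ, where g(t) = f(t) + ∫_a^t Γ_t(t,s) f(s) ds. -/
theorem resolvent_representation (n : ℕ) (a b : ℝ) (hab : a < b)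
    (K : ℝ → ℝ → Matrix (Fin n) (Fin n) ℂ)
    (hK : Continuous fun p : ℝ × ℝ => K p.1 p.2)
    (f : ℝ → Fin n → ℂ) (hf : Continuous f)
    (Γ : ℝ → ℝ → ℝ → Matrix (Fin n) (Fin n) ℂ)  -- Γ ξ t s
    (hΓcont : Continuous fun p : ℝ × ℝ × ℝ => Γ p.1 p.2.1 p.2.2)
    (hres1 : ∀ ξ ∈ Ioc a b, ∀ t ∈ Icc a ξ, ∀ s ∈ Icc a ξ,
      Γ ξ t s - ∫ u in a..ξ, K t u * Γ ξ u s = K t s)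
    (hres2 : ∀ ξ ∈ Ioc a b, ∀ t ∈ Icc a ξ, ∀ s ∈ Icc a ξ,
      Γ ξ t s - ∫ u in a..ξ, Γ ξ t u * K u s = K t s)
    (hΓderiv : ∀ ξ ∈ Icc a b, ∀ t ∈ Icc a ξ, ∀ s ∈ Icc a ξ,
      HasDerivAt (fun η => Γ η t s) (Γ ξ t ξ * Γ ξ ξ s) ξ)
    -- φ is the unique continuous solution of the full equation
    (φ : ℝ → Fin n → ℂ) (hφcont : Continuous φ)
    (hφ : ∀ t ∈ Icc a b, φ t - ∫ s in a..b, K t s *ᵥ φ s = f t)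
    (hφuniq : ∀ ψ : ℝ → Fin n → ℂ, Continuous ψ →
      (∀ t ∈ Icc a b, ψ t - ∫ s in a..b, K t s *ᵥ ψ s = f t) →
      ∀ t ∈ Icc a b, ψ t = φ t) :
    ∀ t ∈ Icc a b,
      φ t = (f t + ∫ s in a..t, Γ t t s *ᵥ f s)
        + ∫ ξ in t..b, Γ ξ t ξ *ᵥ (f ξ + ∫ s in a..ξ, Γ ξ ξ s *ᵥ f s) := by
  have hable : a ≤ b := hab.le
  -- continuity helpers
  have hΓ1 : ∀ (u v w : ℝ → ℝ), Continuous u → Continuous v → Continuous w →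
      Continuous fun x : ℝ => Γ (u x) (v x) (w x) :=
    fun u v w hu hv hw => hΓcont.comp (hu.prodMk (hv.prodMk hw))
  have hΓ2 : ∀ (u v w : ℝ × ℝ → ℝ), Continuous u → Continuous v → Continuous w →
      Continuous fun x : ℝ × ℝ => Γ (u x) (v x) (w x) :=
    fun u v w hu hv hw => hΓcont.comp (hu.prodMk (hv.prodMk hw))
  have hK1 : ∀ (u v : ℝ → ℝ), Continuous u → Continuous v →
      Continuous fun x : ℝ => K (u x) (v x) :=
    fun u v hu hv => hK.comp (hu.prodMk hv)
  -- Step A : φ = f + ∫ Γ_b f on [a,b]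
  have hcΓbf : Continuous (Function.uncurry fun τ s : ℝ => Γ b τ s *ᵥ f s) := by
    exact (hΓ2 (fun _ => b) Prod.fst Prod.snd continuous_const continuous_fst
      continuous_snd).matrix_mulVec (hf.comp continuous_snd)
  have hψcont : Continuous fun τ : ℝ => f τ + ∫ s in a..b, Γ b τ s *ᵥ f s := by
    apply hf.add
    exact intervalIntegral.continuous_parametric_intervalIntegral_of_continuous'
      (f := fun τ s : ℝ => Γ b τ s *ᵥ f s) hcΓbf a b
  have hψ_solves : ∀ τ ∈ Icc a b,
      (f τ + ∫ s in a..b, Γ b τ s *ᵥ f s) - (∫ s in a..b,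
        K τ s *ᵥ (f s + ∫ u in a..b, Γ b s u *ᵥ f u)) = f τ := by
    intro τ hτ
    have e1 : ∀ s : ℝ, K τ s *ᵥ (f s + ∫ u in a..b, Γ b s u *ᵥ f u)
        = K τ s *ᵥ f s + ∫ u in a..b, (K τ s * Γ b s u) *ᵥ f u := by
      intro s
      rw [Matrix.mulVec_add]
      congr 1
      rw [mulVec_integral (K τ s)
        (((hΓ1 (fun _ => b) (fun _ => s) (fun u => u) continuous_const continuous_const
          continuous_id).matrix_mulVec hf).intervalIntegrable _ _)]
      simp [Matrix.mulVec_mulVec]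
    have hint_Kf : IntervalIntegrable (fun s => K τ s *ᵥ f s) volume a b :=
      ((hK1 (fun _ => τ) (fun s => s) continuous_const continuous_id).matrix_mulVec
        hf).intervalIntegrable _ _
    have hcF : Continuous (Function.uncurry fun s u : ℝ => (K τ s * Γ b s u) *ᵥ f u) := by
      exact ((hK.comp (continuous_const.prodMk continuous_fst)).matrix_mul
        (hΓ2 (fun _ => b) Prod.fst Prod.snd continuous_const continuous_fst
          continuous_snd)).matrix_mulVec (hf.comp continuous_snd)
    have hint_Γf : IntervalIntegrable (fun u => Γ b τ u *ᵥ f u) volume a b :=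
      ((hΓ1 (fun _ => b) (fun _ => τ) (fun u => u) continuous_const continuous_const
        continuous_id).matrix_mulVec hf).intervalIntegrable _ _
    have key : (∫ s in a..b, K τ s *ᵥ (f s + ∫ u in a..b, Γ b s u *ᵥ f u))
        = ∫ u in a..b, Γ b τ u *ᵥ f u := by
      calc (∫ s in a..b, K τ s *ᵥ (f s + ∫ u in a..b, Γ b s u *ᵥ f u))
          = ∫ s in a..b, (K τ s *ᵥ f s + ∫ u in a..b, (K τ s * Γ b s u) *ᵥ f u) := by
            simp_rw [e1]
        _ = (∫ s in a..b, K τ s *ᵥ f s)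
            + ∫ s in a..b, ∫ u in a..b, (K τ s * Γ b s u) *ᵥ f u := by
            apply intervalIntegral.integral_add hint_Kf
            exact (intervalIntegral.continuous_parametric_intervalIntegral_of_continuous'
              (f := fun s u : ℝ => (K τ s * Γ b s u) *ᵥ f u) hcF a b).intervalIntegrable _ _
        _ = (∫ s in a..b, K τ s *ᵥ f s)
            + ∫ u in a..b, ∫ s in a..b, (K τ s * Γ b s u) *ᵥ f u := by
            rw [fubini_rect hcF hable hable]
        _ = (∫ s in a..b, K τ s *ᵥ f s)
            + ∫ u in a..b, (Γ b τ u *ᵥ f u - K τ u *ᵥ f u) := by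
            congr 1
            apply intervalIntegral.integral_congr
            intro u hu
            rw [Set.uIcc_of_le hable] at hu
            beta_reduce
            have hint3 : @IntervalIntegrable _ (PseudoMetricSpace.toUniformSpace.toTopologicalSpace) _ (fun s => K τ s * Γ b s u) volume a b :=
              ((hK1 (fun _ => τ) (fun s => s) continuous_const continuous_id).matrix_mul
                (hΓ1 (fun _ => b) (fun s => s) (fun _ => u) continuous_const continuous_id
                  continuous_const)).intervalIntegrable _ _
            rw [integral_mulVec_right hint3 (f u)]
            have hres := hres1 b ⟨hab, le_refl b⟩ τ hτ u hu
            have h2 : (∫ s in a..b, K τ s * Γ b s u) = Γ b τ u - K τ u := by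
              rw [← hres]; abel
            rw [h2, Matrix.sub_mulVec]
        _ = ∫ u in a..b, Γ b τ u *ᵥ f u := by
            rw [intervalIntegral.integral_sub hint_Γf hint_Kf]
            abel
    rw [key]
    abel
  -- ==== Step B/C ====
  intro t ht
  obtain ⟨hta, htb⟩ := ht
  have hφt : φ t = f t + ∫ s in a..b, Γ b t s *ᵥ f s :=
    (hφuniq (fun τ => f τ + ∫ s in a..b, Γ b τ s *ᵥ f s) hψcont hψ_solves t ⟨hta, htb⟩).symm
  -- continuity of the various integrands
  have hcGv : Continuous (Function.uncurry fun ξ s : ℝ => (Γ ξ t ξ * Γ ξ ξ s) *ᵥ f s) := by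
    exact ((hΓ2 Prod.fst (fun _ => t) Prod.fst continuous_fst continuous_const
      continuous_fst).matrix_mul (hΓ2 Prod.fst Prod.fst Prod.snd continuous_fst
      continuous_fst continuous_snd)).matrix_mulVec (hf.comp continuous_snd)
  have hcGv' : Continuous (Function.uncurry fun s ξ : ℝ => (Γ ξ t ξ * Γ ξ ξ s) *ᵥ f s) := by
    exact ((hΓ2 Prod.snd (fun _ => t) Prod.snd continuous_snd continuous_const
      continuous_snd).matrix_mul (hΓ2 Prod.snd Prod.snd Prod.fst continuous_snd
      continuous_snd continuous_fst)).matrix_mulVec (hf.comp continuous_fst)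
  have hcmax : Continuous fun s => Γ (max t s) t s *ᵥ f s :=
    (hΓ1 (fun s => max t s) (fun _ => t) (fun s => s) (continuous_const.max continuous_id)
      continuous_const continuous_id).matrix_mulVec hf
  have hc_tail : Continuous fun s => ∫ ξ in (max t s)..b, (Γ ξ t ξ * Γ ξ ξ s) *ᵥ f s := by
    have base := intervalIntegral.continuous_parametric_intervalIntegral_of_continuous
      (μ := volume) (f := fun s ξ : ℝ => (Γ ξ t ξ * Γ ξ ξ s) *ᵥ f s) (a₀ := b) (s := fun x => max t x) hcGv'
      (continuous_const.max continuous_id)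
    have e : (fun s => ∫ ξ in (max t s)..b, (Γ ξ t ξ * Γ ξ ξ s) *ᵥ f s)
        = fun s => -∫ ξ in b..(max t s), (Γ ξ t ξ * Γ ξ ξ s) *ᵥ f s := by
      funext s; rw [intervalIntegral.integral_symm]
    rw [e]; exact base.neg
  have hcGvξ : ∀ ξ : ℝ, Continuous fun s => (Γ ξ t ξ * Γ ξ ξ s) *ᵥ f s := fun ξ =>
    (continuous_const.matrix_mul (hΓ1 (fun _ => ξ) (fun _ => ξ) (fun s => s)
      continuous_const continuous_const continuous_id)).matrix_mulVec hf
  -- FTC in ξ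
  have hftc : ∀ s ∈ Icc a b,
      Γ b t s = Γ (max t s) t s + ∫ ξ in (max t s)..b, Γ ξ t ξ * Γ ξ ξ s := by
    intro s hs
    have hmb : max t s ≤ b := max_le htb hs.2
    have heq : ∫ ξ in (max t s)..b, Γ ξ t ξ * Γ ξ ξ s
        = Γ b t s - Γ (max t s) t s := by
      apply intervalIntegral.integral_eq_sub_of_hasDerivAt
      · intro ξ hξ
        rw [Set.uIcc_of_le hmb] at hξ
        exact hΓderiv ξ ⟨le_trans hta (le_trans (le_max_left t s) hξ.1), hξ.2⟩
          t ⟨hta, le_trans (le_max_left t s) hξ.1⟩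
          s ⟨hs.1, le_trans (le_max_right t s) hξ.1⟩
      · exact ((hΓ1 (fun ξ => ξ) (fun _ => t) (fun ξ => ξ) continuous_id continuous_const
          continuous_id).matrix_mul (hΓ1 (fun ξ => ξ) (fun ξ => ξ) (fun _ => s)
          continuous_id continuous_id continuous_const)).intervalIntegrable _ _
    rw [heq]; abel
  have hsplitf : ∀ s ∈ uIcc a b, Γ b t s *ᵥ f s
      = Γ (max t s) t s *ᵥ f s + ∫ ξ in (max t s)..b, (Γ ξ t ξ * Γ ξ ξ s) *ᵥ f s := by
    intro s hs
    rw [Set.uIcc_of_le hable] at hs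
    have hint : @IntervalIntegrable _ (PseudoMetricSpace.toUniformSpace.toTopologicalSpace) _ (fun ξ => Γ ξ t ξ * Γ ξ ξ s) volume (max t s) b :=
      ((hΓ1 (fun ξ => ξ) (fun _ => t) (fun ξ => ξ) continuous_id continuous_const
        continuous_id).matrix_mul (hΓ1 (fun ξ => ξ) (fun ξ => ξ) (fun _ => s)
        continuous_id continuous_id continuous_const)).intervalIntegrable _ _
    rw [hftc s hs, Matrix.add_mulVec]
    congr 1
    rw [integral_mulVec_right hint (f s)]
  -- splitting P1
  have hP1 : ∫ s in a..b, Γ (max t s) t s *ᵥ f s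
      = (∫ s in a..t, Γ t t s *ᵥ f s) + ∫ s in t..b, Γ s t s *ᵥ f s := by
    rw [← intervalIntegral.integral_add_adjacent_intervals
      (hcmax.intervalIntegrable a t) (hcmax.intervalIntegrable t b)]
    congr 1
    · apply intervalIntegral.integral_congr
      intro s hs
      rw [Set.uIcc_of_le hta] at hs
      beta_reduce
      rw [max_eq_left hs.2]
    · apply intervalIntegral.integral_congr
      intro s hs
      rw [Set.uIcc_of_le htb] at hs
      beta_reduce
      rw [max_eq_right hs.1]
  -- integrability of the two pieces in ξ
  have hI1 : IntervalIntegrable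
      (fun ξ => ∫ s in a..t, (Γ ξ t ξ * Γ ξ ξ s) *ᵥ f s) volume t b :=
    (intervalIntegral.continuous_parametric_intervalIntegral_of_continuous'
      (f := fun ξ s : ℝ => (Γ ξ t ξ * Γ ξ ξ s) *ᵥ f s) hcGv a t).intervalIntegrable _ _
  have hI2 : IntervalIntegrable
      (fun ξ => ∫ s in t..ξ, (Γ ξ t ξ * Γ ξ ξ s) *ᵥ f s) volume t b :=
    (intervalIntegral.continuous_parametric_intervalIntegral_of_continuous
      (μ := volume) (f := fun ξ s : ℝ => (Γ ξ t ξ * Γ ξ ξ s) *ᵥ f s) (a₀ := t) hcGv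
      continuous_id).intervalIntegrable _ _
  have hI3 : IntervalIntegrable (fun ξ => Γ ξ t ξ *ᵥ f ξ) volume t b :=
    ((hΓ1 (fun ξ => ξ) (fun _ => t) (fun ξ => ξ) continuous_id continuous_const
      continuous_id).matrix_mulVec hf).intervalIntegrable _ _
  -- P2 via Fubini
  have hI4 : IntervalIntegrable
      (fun ξ => ∫ s in a..ξ, (Γ ξ t ξ * Γ ξ ξ s) *ᵥ f s) volume t b :=
    (intervalIntegral.continuous_parametric_intervalIntegral_of_continuous
      (μ := volume) (f := fun ξ s : ℝ => (Γ ξ t ξ * Γ ξ ξ s) *ᵥ f s) (a₀ := a)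
      (s := fun x => x) hcGv continuous_id).intervalIntegrable _ _
  have hP2 : ∫ s in a..b, ∫ ξ in (max t s)..b, (Γ ξ t ξ * Γ ξ ξ s) *ᵥ f s
      = ∫ ξ in t..b, ∫ s in a..ξ, (Γ ξ t ξ * Γ ξ ξ s) *ᵥ f s := by
    rw [← intervalIntegral.integral_add_adjacent_intervals
      (hc_tail.intervalIntegrable a t) (hc_tail.intervalIntegrable t b)]
    have h2a : ∫ s in a..t, ∫ ξ in (max t s)..b, (Γ ξ t ξ * Γ ξ ξ s) *ᵥ f s
        = ∫ ξ in t..b, ∫ s in a..t, (Γ ξ t ξ * Γ ξ ξ s) *ᵥ f s := by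
      rw [show (∫ s in a..t, ∫ ξ in (max t s)..b, (Γ ξ t ξ * Γ ξ ξ s) *ᵥ f s)
          = ∫ s in a..t, ∫ ξ in t..b, (Γ ξ t ξ * Γ ξ ξ s) *ᵥ f s from
        intervalIntegral.integral_congr (fun s hs => by
          rw [Set.uIcc_of_le hta] at hs
          beta_reduce
          rw [max_eq_left hs.2])]
      exact fubini_rect (F := fun s ξ => (Γ ξ t ξ * Γ ξ ξ s) *ᵥ f s) hcGv' hta htb
    have h2b : ∫ s in t..b, ∫ ξ in (max t s)..b, (Γ ξ t ξ * Γ ξ ξ s) *ᵥ f s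
        = ∫ ξ in t..b, ∫ s in t..ξ, (Γ ξ t ξ * Γ ξ ξ s) *ᵥ f s := by
      rw [show (∫ s in t..b, ∫ ξ in (max t s)..b, (Γ ξ t ξ * Γ ξ ξ s) *ᵥ f s)
          = ∫ s in t..b, ∫ ξ in s..b, (Γ ξ t ξ * Γ ξ ξ s) *ᵥ f s from
        intervalIntegral.integral_congr (fun s hs => by
          rw [Set.uIcc_of_le htb] at hs
          beta_reduce
          rw [max_eq_right hs.1])]
      exact fubini_tri (F := fun ξ s => (Γ ξ t ξ * Γ ξ ξ s) *ᵥ f s) hcGv htb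
    rw [h2a, h2b, ← intervalIntegral.integral_add hI1 hI2]
    apply intervalIntegral.integral_congr
    intro ξ hξ
    beta_reduce
    exact intervalIntegral.integral_add_adjacent_intervals
      ((hcGvξ ξ).intervalIntegrable a t) ((hcGvξ ξ).intervalIntegrable t ξ)
  -- final reassembly
  have hfin : ∫ ξ in t..b, Γ ξ t ξ *ᵥ (f ξ + ∫ s in a..ξ, Γ ξ ξ s *ᵥ f s)
      = (∫ ξ in t..b, Γ ξ t ξ *ᵥ f ξ)
        + ∫ ξ in t..b, ∫ s in a..ξ, (Γ ξ t ξ * Γ ξ ξ s) *ᵥ f s := by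
    have e : ∀ ξ ∈ uIcc t b, Γ ξ t ξ *ᵥ (f ξ + ∫ s in a..ξ, Γ ξ ξ s *ᵥ f s)
        = Γ ξ t ξ *ᵥ f ξ + ∫ s in a..ξ, (Γ ξ t ξ * Γ ξ ξ s) *ᵥ f s := by
      intro ξ hξ
      rw [Matrix.mulVec_add]
      congr 1
      rw [mulVec_integral (Γ ξ t ξ) (((hΓ1 (fun _ => ξ) (fun _ => ξ) (fun s => s)
        continuous_const continuous_const continuous_id).matrix_mulVec
        hf).intervalIntegrable _ _)]
      simp [Matrix.mulVec_mulVec]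
    rw [intervalIntegral.integral_congr e, intervalIntegral.integral_add hI3 hI4]
  rw [hφt, intervalIntegral.integral_congr hsplitf,
    intervalIntegral.integral_add (hcmax.intervalIntegrable _ _)
      (hc_tail.intervalIntegrable _ _), hP1, hP2, hfin]
  abel
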